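/- The Koornwinder polynomials K_{nm}(ξ,η) = γ_{nm} P_{n−m}^{(0,2m+1)}(1−2η) P_m^{(0,0)}(2ξ/(1−η) − 1)(1−η)^m, for 0 ≤ m ≤ n, form an orthogonal family on the standard simplex T̂₀: ∫_{T̂₀} K_{nm}(ξ,η) K_{n'm'}(ξ,η) dξ dη = 0 whenever (n,m) ≠ (n',m'). -/

import Mathlib

open MeasureTheory Set

/-- The standard 2-simplex `T̂₀ = {(ξ,η) : ξ ≥ 0, η ≥ 0, ξ + η ≤ 1}`. -/
def stdSimplex2 : Set (ℝ × ℝ) := {p | 0 ≤ p.1 ∧ 0 ≤ p.2 ∧ p.1 + p.2 ≤ 1}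

/-- The Jacobi polynomial `P_n^{(a,b)}` (explicit hypergeometric sum formula). -/
noncomputable def jacobiP (n a b : ℕ) (x : ℝ) : ℝ :=
  ∑ s ∈ Finset.range (n + 1),
    (Nat.choose (n + a) (n - s) : ℝ) * (Nat.choose (n + b) s : ℝ) *
      ((x - 1) / 2) ^ s * ((x + 1) / 2) ^ (n - s)

/-- The Koornwinder function
`K_{nm}(ξ,η) = γ P_{n−m}^{(0,2m+1)}(1−2η) P_m^{(0,0)}(2ξ/(1−η) − 1)(1−η)^m`. -/
noncomputable def koornwinder (γ : ℝ) (n m : ℕ) (ξ η : ℝ) : ℝ :=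
  γ * jacobiP (n - m) 0 (2 * m + 1) (1 - 2 * η) *
    jacobiP m 0 0 (2 * ξ / (1 - η) - 1) * (1 - η) ^ m


lemma altsum_rec (k : ℕ) (f : ℕ → ℝ) :
    ∑ s ∈ Finset.range (k + 2), (-1 : ℝ) ^ s * (Nat.choose (k+1) s) * f s
      = ∑ s ∈ Finset.range (k + 1), (-1 : ℝ) ^ s * (Nat.choose k s) * (f s - f (s+1)) := by
  have h1 : ∑ s ∈ Finset.range (k + 2), (-1 : ℝ) ^ s * (Nat.choose (k+1) s) * f s
      = (∑ s ∈ Finset.range (k+1), (-1:ℝ)^(s+1) * (Nat.choose (k+1) (s+1)) * f (s+1)) + f 0 := by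
    rw [Finset.sum_range_succ' (fun s => (-1 : ℝ) ^ s * (Nat.choose (k+1) s) * f s) (k+1)]
    simp
  have h2 : ∑ s ∈ Finset.range (k + 2), (-1 : ℝ) ^ s * (Nat.choose k s) * f s
      = (∑ s ∈ Finset.range (k+1), (-1:ℝ)^(s+1) * (Nat.choose k (s+1)) * f (s+1)) + f 0 := by
    rw [Finset.sum_range_succ' (fun s => (-1 : ℝ) ^ s * (Nat.choose k s) * f s) (k+1)]
    simp
  have h3 : ∑ s ∈ Finset.range (k + 2), (-1 : ℝ) ^ s * (Nat.choose k s) * f s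
      = ∑ s ∈ Finset.range (k + 1), (-1 : ℝ) ^ s * (Nat.choose k s) * f s := by
    rw [Finset.sum_range_succ]
    simp [Nat.choose_eq_zero_of_lt (Nat.lt_succ_self k)]
  have h4 : ∀ s, ((Nat.choose (k+1) (s+1) : ℝ)) = (Nat.choose k s : ℝ) + (Nat.choose k (s+1) : ℝ) := by
    intro s; rw [Nat.choose_succ_succ]; push_cast; ring
  rw [h1]
  have : (∑ s ∈ Finset.range (k+1), (-1:ℝ)^(s+1) * (Nat.choose (k+1) (s+1)) * f (s+1))
      = (∑ s ∈ Finset.range (k+1), (-1:ℝ)^(s+1) * (Nat.choose k s) * f (s+1))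
        + (∑ s ∈ Finset.range (k+1), (-1:ℝ)^(s+1) * (Nat.choose k (s+1)) * f (s+1)) := by
    rw [← Finset.sum_add_distrib]
    refine Finset.sum_congr rfl fun s _ => ?_
    rw [h4]; ring
  rw [this]
  have h5 : (∑ s ∈ Finset.range (k+1), (-1:ℝ)^(s+1) * (Nat.choose k (s+1)) * f (s+1)) + f 0
      = ∑ s ∈ Finset.range (k + 1), (-1 : ℝ) ^ s * (Nat.choose k s) * f s := by
    rw [← h3, h2]
  rw [add_assoc, h5, ← Finset.sum_add_distrib]
  refine Finset.sum_congr rfl fun s _ => ?_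
  ring

lemma altzero (n : ℕ) (h : n ≠ 0) : ∑ s ∈ Finset.range (n+1), (-1:ℝ)^s * (Nat.choose n s) = 0 := by
  have := Int.alternating_sum_range_choose_of_ne h
  have : ((∑ i ∈ Finset.range (n + 1), (-1 : ℤ) ^ i * ↑(n.choose i) : ℤ) : ℝ) = 0 := by rw [this]; simp
  push_cast at this
  convert this using 2

lemma altsum_choose (k : ℕ) : ∀ j c : ℕ, j ≤ k →
    ∑ s ∈ Finset.range (k+2), (-1:ℝ)^s * (Nat.choose (k+1) s) * (Nat.choose (s+c+j) j) = 0 := by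
  induction k with
  | zero =>
      intro j c hj
      interval_cases j
      simp [Finset.sum_range_succ]
  | succ k ih =>
      intro j c hj
      match j with
      | 0 =>
          have := altzero (k+2) (by omega)
          simpa using this
      | j'+1 =>
          rw [altsum_rec]
          have hstep : ∀ s : ℕ, ((Nat.choose (s+c+(j'+1)) (j'+1) : ℝ) - (Nat.choose (s+1+c+(j'+1)) (j'+1) : ℝ))
              = -(Nat.choose (s+(c+1)+j') j' : ℝ) := by
            intro s
            have h1 : s+1+c+(j'+1) = (s+c+j'+1) + 1 := by omega
            have h2 : (Nat.choose ((s+c+j'+1)+1) (j'+1) : ℕ) = Nat.choose (s+c+j'+1) j' + Nat.choose (s+c+j'+1) (j'+1) := Nat.choose_succ_succ _ _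
            have h3 : s+(c+1)+j' = s+c+j'+1 := by omega
            have h4 : s+c+(j'+1) = s+c+j'+1 := by omega
            rw [h1, h2, h3, h4]; push_cast; ring
          have : ∑ s ∈ Finset.range (k+2), (-1:ℝ)^s * (Nat.choose (k+1) s) * ((Nat.choose (s+c+(j'+1)) (j'+1) : ℝ) - (Nat.choose (s+1+c+(j'+1)) (j'+1) : ℝ))
              = -∑ s ∈ Finset.range (k+2), (-1:ℝ)^s * (Nat.choose (k+1) s) * (Nat.choose (s+(c+1)+j') j' : ℝ) := by
            rw [← Finset.sum_neg_distrib]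
            refine Finset.sum_congr rfl fun s _ => ?_
            rw [hstep s]; ring
          rw [this, ih j' (c+1) (by omega)]
          ring

lemma beta_step (a b : ℕ) :
    ∫ x in (0:ℝ)..1, x^a * (1-x)^(b+1)
      = ((b+1 : ℝ)/(a+1)) * ∫ x in (0:ℝ)..1, x^(a+1) * (1-x)^b := by
  have hu : ∀ x ∈ Set.uIcc (0:ℝ) 1, HasDerivAt (fun x : ℝ => (1-x)^(b+1))
      (-((b+1) * (1-x)^b)) x := by
    intro x _
    have h1 : HasDerivAt (fun x : ℝ => 1 - x) (-1) x := by
      simpa using (hasDerivAt_id x).const_sub 1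
    have h2 := (hasDerivAt_pow (b+1) (1-x)).comp x h1
    refine h2.congr_deriv ?_
    rw [Nat.add_sub_cancel]; push_cast; ring
  have hv : ∀ x ∈ Set.uIcc (0:ℝ) 1, HasDerivAt (fun x : ℝ => x^(a+1)/(a+1))
      (x^a) x := by
    intro x _
    have h2 := (hasDerivAt_pow (a+1) x).div_const (a+1)
    refine h2.congr_deriv ?_
    rw [Nat.add_sub_cancel]; push_cast; field_simp
  have key := intervalIntegral.integral_mul_deriv_eq_deriv_mul hu hv
    (by apply Continuous.intervalIntegrable; fun_prop)
    (by apply Continuous.intervalIntegrable; fun_prop)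
  have l1 : ∫ x in (0:ℝ)..1, x^a * (1-x)^(b+1) = ∫ x in (0:ℝ)..1, (1-x)^(b+1) * x^a := by
    congr 1; funext x; ring
  rw [l1, key]
  have l2 : ∫ x in (0:ℝ)..1, -((b+1) * (1-x)^b) * (x^(a+1)/(a+1))
      = -(((b+1 : ℝ)/(a+1)) * ∫ x in (0:ℝ)..1, x^(a+1) * (1-x)^b) := by
    rw [← intervalIntegral.integral_const_mul]
    rw [← intervalIntegral.integral_neg]
    congr 1; funext x
    have ha : (a:ℝ)+1 ≠ 0 := by positivity
    field_simp
  rw [l2]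
  norm_num

lemma beta_nat (b a : ℕ) :
    ∫ x in (0:ℝ)..1, x^a * (1-x)^b
      = (Nat.factorial a * Nat.factorial b : ℝ) / (Nat.factorial (a+b+1)) := by
  induction b generalizing a with
  | zero =>
      simp only [pow_zero, mul_one]
      rw [integral_pow]
      rw [show a + 0 + 1 = a + 1 by omega, Nat.factorial_succ, Nat.factorial_zero]
      have h2 : (a:ℝ)+1 ≠ 0 := by positivity
      have hf : (Nat.factorial a : ℝ) ≠ 0 := by positivity
      push_cast
      rw [zero_pow (by omega), one_pow]
      field_simp
      norm_num
  | succ b ih =>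
      rw [beta_step, ih (a+1)]
      have h1 : (Nat.factorial (a+b+2) : ℝ) ≠ 0 := by positivity
      have h2 : (a:ℝ)+1 ≠ 0 := by positivity
      rw [show a+1+b+1 = a+b+2 by omega, show a+(b+1)+1 = a+b+2 by omega,
        Nat.factorial_succ (a), Nat.factorial_succ (b)]
      push_cast
      field_simp

lemma jacobiP_cont (n a b : ℕ) : Continuous (fun x : ℝ => jacobiP n a b x) := by
  unfold jacobiP; fun_prop

lemma mono_orth (k b j : ℕ) (hj : j < k) :
    ∫ η in (0:ℝ)..1, η^j * jacobiP k 0 b (1-2*η) * (1-η)^b = 0 := by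
  obtain ⟨K, rfl⟩ : ∃ K, k = K + 1 := ⟨k-1, by omega⟩
  have hpt : ∀ η : ℝ, η^j * jacobiP (K+1) 0 b (1-2*η) * (1-η)^b
      = ∑ s ∈ Finset.range (K+2),
          ((Nat.choose (K+1) ((K+1)-s) : ℝ) * (Nat.choose (K+1+b) s) * (-1)^s)
            * (η^(j+s) * (1-η)^(((K+1)-s)+b)) := by
    intro η
    unfold jacobiP
    rw [Finset.mul_sum, Finset.sum_mul]
    refine Finset.sum_congr (by norm_num) fun s _ => ?_
    have e1 : ((1-2*η-1)/2 : ℝ) = -η := by ring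
    have e2 : ((1-2*η+1)/2 : ℝ) = 1-η := by ring
    rw [e1, e2, pow_add, pow_add, neg_pow]
    norm_num
    ring
  simp only [hpt]
  rw [intervalIntegral.integral_finset_sum (fun s _ => by
    apply Continuous.intervalIntegrable; fun_prop)]
  have hbeta : ∀ s ∈ Finset.range (K+2),
      (∫ η in (0:ℝ)..1, ((Nat.choose (K+1) ((K+1)-s) : ℝ) * (Nat.choose (K+1+b) s) * (-1)^s)
            * (η^(j+s) * (1-η)^(((K+1)-s)+b)))
      = ((Nat.factorial j : ℝ) * (Nat.factorial (K+1+b)) / (Nat.factorial (j+(K+1)+b+1)))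
          * ((-1:ℝ)^s * (Nat.choose (K+1) s) * (Nat.choose (s+0+j) j)) := by
    intro s hs
    rw [Finset.mem_range] at hs
    rw [intervalIntegral.integral_const_mul, beta_nat]
    have hsK : s ≤ K+1 := by omega
    rw [show (j+s) + ((K+1)-s+b) + 1 = j+(K+1)+b+1 by omega]
    have c1 : (Nat.choose (K+1) ((K+1)-s) : ℝ) = (Nat.choose (K+1) s : ℝ) := by
      rw [Nat.choose_symm hsK]
    have c2 : (Nat.choose (K+1+b) s : ℝ) * (Nat.factorial ((K+1)-s+b)) * (Nat.factorial s)
        = (Nat.factorial (K+1+b) : ℝ) := by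
      have h := Nat.choose_mul_factorial_mul_factorial (show s ≤ K+1+b by omega)
      have h' : Nat.choose (K+1+b) s * Nat.factorial ((K+1)-s+b) * Nat.factorial s
          = Nat.factorial (K+1+b) := by
        rw [show (K+1)-s+b = K+1+b-s by omega, ← h]; ring
      exact_mod_cast h'
    have c3 : (Nat.factorial (j+s) : ℝ)
        = (Nat.choose (j+s) j : ℝ) * (Nat.factorial j) * (Nat.factorial s) := by
      have h := Nat.choose_mul_factorial_mul_factorial (show j ≤ j+s by omega)
      rw [show j+s-j = s by omega] at h
      exact_mod_cast h.symm
    rw [c1, show s+0+j = j+s by omega, c3]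
    have hF : (Nat.factorial (j+(K+1)+b+1) : ℝ) ≠ 0 := by positivity
    field_simp
    linear_combination ((Nat.choose (K+1) s : ℝ) * (Nat.choose (j+s) j)) * c2
  rw [Finset.sum_congr rfl hbeta, ← Finset.mul_sum, altsum_choose K j 0 (by omega), mul_zero]

lemma jacobi_orth (b k l : ℕ) (h : l < k) :
    ∫ η in (0:ℝ)..1, jacobiP k 0 b (1-2*η) * jacobiP l 0 b (1-2*η) * (1-η)^b = 0 := by
  have hpt : ∀ η : ℝ, jacobiP k 0 b (1-2*η) * jacobiP l 0 b (1-2*η) * (1-η)^b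
      = ∑ s ∈ Finset.range (l+1), ∑ t ∈ Finset.range ((l-s)+1),
          ((Nat.choose (l+0) (l-s) : ℝ) * (Nat.choose (l+b) s) * (-1)^s
            * (Nat.choose (l-s) t) * (-1)^t)
            * (η^(s+t) * jacobiP k 0 b (1-2*η) * (1-η)^b) := by
    intro η
    have hl : jacobiP l 0 b (1-2*η) = ∑ s ∈ Finset.range (l+1),
        (Nat.choose (l+0) (l-s) : ℝ) * (Nat.choose (l+b) s) * (-η)^s * (1-η)^(l-s) := by
      unfold jacobiP
      refine Finset.sum_congr rfl fun s _ => ?_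
      have e1 : ((1-2*η-1)/2 : ℝ) = -η := by ring
      have e2 : ((1-2*η+1)/2 : ℝ) = 1-η := by ring
      rw [e1, e2]
    rw [hl, Finset.mul_sum, Finset.sum_mul]
    refine Finset.sum_congr rfl fun s hs => ?_
    have hsub : ((1:ℝ)-η)^(l-s) = ∑ t ∈ Finset.range ((l-s)+1),
        (-η)^t * 1^((l-s)-t) * (Nat.choose (l-s) t) := by
      rw [show ((1:ℝ)-η) = (-η) + 1 by ring, add_pow]
    rw [hsub, Finset.mul_sum, Finset.mul_sum, Finset.sum_mul]
    refine Finset.sum_congr rfl fun t ht => ?_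
    rw [pow_add, neg_pow, neg_pow, one_pow]
    ring
  have hc : Continuous (fun η : ℝ => jacobiP k 0 b (1-2*η)) :=
    (jacobiP_cont k 0 b).comp (by fun_prop)
  have hint : ∀ (c : ℝ) (e : ℕ), IntervalIntegrable
      (fun η : ℝ => c * (η^e * jacobiP k 0 b (1-2*η) * (1-η)^b)) MeasureTheory.volume 0 1 := by
    intro c e
    apply Continuous.intervalIntegrable
    exact continuous_const.mul (((continuous_pow e).mul hc).mul (by fun_prop))
  simp only [hpt]
  have hw : Continuous (fun η : ℝ => (1-η)^b) := by fun_prop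
  have hcont : ∀ (c : ℝ) (e : ℕ), Continuous
      (fun η : ℝ => c * (η^e * jacobiP k 0 b (1-2*η) * (1-η)^b)) :=
    fun c e => continuous_const.mul (((continuous_pow e).mul hc).mul hw)
  rw [intervalIntegral.integral_finset_sum (fun s _ =>
    (continuous_finset_sum _ (fun t _ => hcont _ _)).intervalIntegrable 0 1)]
  refine Finset.sum_eq_zero fun s hs => ?_
  rw [intervalIntegral.integral_finset_sum (fun t _ => hint _ _)]
  refine Finset.sum_eq_zero fun t ht => ?_
  rw [Finset.mem_range] at hs ht
  rw [intervalIntegral.integral_const_mul, mono_orth k b (s+t) (by omega), mul_zero]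

noncomputable def legSum (m : ℕ) (ξ η : ℝ) : ℝ :=
  ∑ s ∈ Finset.range (m+1),
    (Nat.choose m (m-s) : ℝ) * (Nat.choose m s) * (ξ-(1-η))^s * ξ^(m-s)

lemma legSum_cont (m : ℕ) : Continuous (fun p : ℝ × ℝ => legSum m p.1 p.2) := by
  unfold legSum; fun_prop

lemma legSum_eq (m : ℕ) (ξ η : ℝ) (hη : η ≠ 1) :
    jacobiP m 0 0 (2*ξ/(1-η)-1) * (1-η)^m = legSum m ξ η := by
  have hne : (1:ℝ) - η ≠ 0 := sub_ne_zero.mpr (Ne.symm hη)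
  unfold jacobiP legSum
  rw [Finset.sum_mul]
  refine Finset.sum_congr rfl fun s hs => ?_
  rw [Finset.mem_range] at hs
  have e1 : (2*ξ/(1-η)-1-1)/2 = (ξ-(1-η))/(1-η) := by field_simp; ring
  have e2 : (2*ξ/(1-η)-1+1)/2 = ξ/(1-η) := by field_simp; ring
  rw [e1, e2, div_pow, div_pow,
    show ((1:ℝ)-η)^m = (1-η)^s * (1-η)^(m-s) from by rw [← pow_add]; congr 1; omega]
  have h1 : ((1:ℝ)-η)^s ≠ 0 := pow_ne_zero _ hne
  have h2 : ((1:ℝ)-η)^(m-s) ≠ 0 := pow_ne_zero _ hne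
  field_simp
  simp only [add_zero]; ring

lemma legSum_scale (m : ℕ) (t η : ℝ) :
    legSum m (t*(1-η)) η = (1-η)^m * jacobiP m 0 0 (2*t-1) := by
  unfold jacobiP legSum
  rw [Finset.mul_sum]
  refine Finset.sum_congr rfl fun s hs => ?_
  rw [Finset.mem_range] at hs
  have e1 : (2*t-1-1)/2 = t-1 := by ring
  have e2 : (2*t-1+1)/2 = t := by ring
  rw [e1, e2,
    show ((1:ℝ)-η)^m = (1-η)^s * (1-η)^(m-s) from by rw [← pow_add]; congr 1; omega,
    show (t*(1-η)-(1-η)) = (t-1)*(1-η) from by ring, mul_pow, mul_pow]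
  norm_num
  ring

lemma stdSimplex2_closed : IsClosed stdSimplex2 := by
  have : stdSimplex2 = Prod.fst ⁻¹' (Set.Ici 0) ∩
      (Prod.snd ⁻¹' (Set.Ici 0) ∩ (fun p : ℝ×ℝ => p.1+p.2) ⁻¹' (Set.Iic 1)) := by
    ext p; simp [stdSimplex2, and_assoc]
  rw [this]
  exact (isClosed_Ici.preimage continuous_fst).inter
    ((isClosed_Ici.preimage continuous_snd).inter
      (isClosed_Iic.preimage (by fun_prop)))

lemma stdSimplex2_meas : MeasurableSet stdSimplex2 := stdSimplex2_closed.measurableSet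

lemma stdSimplex2_sub : stdSimplex2 ⊆ Set.Icc ((0:ℝ),(0:ℝ)) (1,1) := by
  rintro ⟨x,y⟩ ⟨h1,h2,h3⟩
  simp only [Set.mem_Icc, Prod.le_def]
  exact ⟨⟨h1,h2⟩, ⟨by linarith, by linarith⟩⟩

lemma simplex_integral (F : ℝ × ℝ → ℝ) (hF : Continuous F) :
    ∫ p in stdSimplex2, F p = ∫ η in (0:ℝ)..1, ∫ ξ in (0:ℝ)..(1-η), F (ξ, η) := by
  have hI : MeasureTheory.IntegrableOn F stdSimplex2 :=
    (hF.continuousOn.integrableOn_compact isCompact_Icc).mono_set stdSimplex2_sub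
  have hind : MeasureTheory.Integrable (stdSimplex2.indicator F) :=
    hI.integrable_indicator stdSimplex2_meas
  rw [← MeasureTheory.integral_indicator stdSimplex2_meas]
  rw [show (MeasureTheory.volume : MeasureTheory.Measure (ℝ×ℝ))
    = MeasureTheory.volume.prod MeasureTheory.volume from MeasureTheory.Measure.volume_eq_prod ℝ ℝ] at hind ⊢
  rw [MeasureTheory.integral_prod_symm _ hind]
  have hslice : ∀ η : ℝ, (∫ ξ : ℝ, stdSimplex2.indicator F (ξ,η))
      = Set.indicator (Set.Icc (0:ℝ) 1)
          (fun η => ∫ ξ in (0:ℝ)..(1-η), F (ξ,η)) η := by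
    intro η
    by_cases hη : η ∈ Set.Icc (0:ℝ) 1
    · rw [Set.indicator_of_mem hη]
      obtain ⟨h0, h1⟩ := hη
      have hfun : (fun ξ : ℝ => stdSimplex2.indicator F (ξ,η))
          = Set.indicator (Set.Icc (0:ℝ) (1-η)) (fun ξ => F (ξ,η)) := by
        funext ξ
        simp only [Set.indicator_apply, Set.mem_Icc, stdSimplex2, Set.mem_setOf_eq]
        have hiff : (0 ≤ (ξ,η).1 ∧ 0 ≤ (ξ,η).2 ∧ (ξ,η).1 + (ξ,η).2 ≤ 1)
            ↔ (0 ≤ ξ ∧ ξ ≤ 1-η) := by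
          constructor
          · rintro ⟨a,b,c⟩; exact ⟨a, by linarith⟩
          · rintro ⟨a,b⟩; exact ⟨a, h0, by linarith⟩
        rw [if_congr hiff rfl rfl]
      rw [hfun, MeasureTheory.integral_indicator measurableSet_Icc,
        MeasureTheory.integral_Icc_eq_integral_Ioc,
        ← intervalIntegral.integral_of_le (by linarith : (0:ℝ) ≤ 1-η)]
    · rw [Set.indicator_of_notMem hη]
      have : ∀ ξ : ℝ, stdSimplex2.indicator F (ξ,η) = 0 := by
        intro ξ
        apply Set.indicator_of_notMem
        simp only [stdSimplex2, Set.mem_setOf_eq]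
        simp only [Set.mem_Icc, not_and_or, not_le] at hη
        rcases hη with h | h
        · rintro ⟨-, b, -⟩; linarith
        · rintro ⟨a, -, c⟩; linarith
      simp [this]
  rw [show (fun η : ℝ => ∫ ξ : ℝ, stdSimplex2.indicator F (ξ,η))
      = Set.indicator (Set.Icc (0:ℝ) 1) (fun η => ∫ ξ in (0:ℝ)..(1-η), F (ξ,η))
    from funext hslice]
  rw [MeasureTheory.integral_indicator measurableSet_Icc,
    MeasureTheory.integral_Icc_eq_integral_Ioc,
    ← intervalIntegral.integral_of_le (zero_le_one)]

lemma leg_orth_lt (k l : ℕ) (hkl : l < k) :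
    ∫ t in (0:ℝ)..1, jacobiP k 0 0 (2*t-1) * jacobiP l 0 0 (2*t-1) = 0 := by
  have h2 := jacobi_orth 0 k l hkl
  simp only [pow_zero, mul_one] at h2
  have h5 : ∫ t in (0:ℝ)..1, jacobiP k 0 0 (2*t-1) * jacobiP l 0 0 (2*t-1)
      = ∫ t in (0:ℝ)..1, (fun u => jacobiP k 0 0 (1-2*u) * jacobiP l 0 0 (1-2*u)) (1-t) := by
    refine intervalIntegral.integral_congr fun x _ => ?_
    simp only
    rw [show (1:ℝ)-2*(1-x) = 2*x-1 by ring]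
  have h6 := intervalIntegral.integral_comp_sub_left (a := (0:ℝ)) (b := 1)
    (fun u => jacobiP k 0 0 (1-2*u) * jacobiP l 0 0 (1-2*u)) 1
  rw [h5, h6]
  norm_num
  exact h2

lemma leg_orth (m m' : ℕ) (h : m ≠ m') :
    ∫ t in (0:ℝ)..1, jacobiP m 0 0 (2*t-1) * jacobiP m' 0 0 (2*t-1) = 0 := by
  rcases h.lt_or_gt with hlt | hlt
  · rw [intervalIntegral.integral_congr (g := fun t =>
      jacobiP m' 0 0 (2*t-1) * jacobiP m 0 0 (2*t-1)) (fun x _ => mul_comm _ _)]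
    exact leg_orth_lt m' m hlt
  · exact leg_orth_lt m m' hlt

noncomputable def kq (γ : ℝ) (n m : ℕ) (ξ η : ℝ) : ℝ :=
  γ * jacobiP (n - m) 0 (2 * m + 1) (1 - 2 * η) * legSum m ξ η

lemma kq_cont (γ : ℝ) (n m : ℕ) : Continuous (fun p : ℝ × ℝ => kq γ n m p.1 p.2) := by
  unfold kq
  exact (continuous_const.mul ((jacobiP_cont (n-m) 0 (2*m+1)).comp
    (by fun_prop : Continuous fun p : ℝ×ℝ => 1-2*p.2))).mul (legSum_cont m)

lemma koorn_eq_kq (γ : ℝ) (n m : ℕ) (ξ η : ℝ) (hη : η ≠ 1) :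
    koornwinder γ n m ξ η = kq γ n m ξ η := by
  unfold koornwinder kq
  rw [mul_assoc, legSum_eq m ξ η hη]

/-- Orthogonality of the Koornwinder polynomials on the standard simplex:
`∫_{T̂₀} K_{nm} K_{n'm'} dξ dη = 0` whenever `(n,m) ≠ (n',m')`. -/
theorem koornwinder_orthogonal
    (γ : ℕ → ℕ → ℝ) (hγ : ∀ n m, 0 < γ n m)
    (hnorm : ∀ n m, m ≤ n →
      (∫ p in stdSimplex2, (koornwinder (γ n m) n m p.1 p.2) ^ 2) = 1)
    (n m n' m' : ℕ) (hm : m ≤ n) (hm' : m' ≤ n') (hne : (n, m) ≠ (n', m')) :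
    ∫ p in stdSimplex2,
      koornwinder (γ n m) n m p.1 p.2 * koornwinder (γ n' m') n' m' p.1 p.2 = 0 := by
  have hnull : MeasureTheory.volume {p : ℝ×ℝ | p.2 = (1:ℝ)} = 0 := by
    have hset : {p : ℝ×ℝ | p.2 = (1:ℝ)} = (Set.univ : Set ℝ) ×ˢ ({1} : Set ℝ) := by
      ext ⟨x,y⟩; simp [Set.mem_prod, eq_comm]
    rw [hset, MeasureTheory.Measure.volume_eq_prod, MeasureTheory.Measure.prod_prod]
    simp
  have hAe : ∫ p in stdSimplex2,
        koornwinder (γ n m) n m p.1 p.2 * koornwinder (γ n' m') n' m' p.1 p.2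
      = ∫ p in stdSimplex2, kq (γ n m) n m p.1 p.2 * kq (γ n' m') n' m' p.1 p.2 := by
    apply MeasureTheory.setIntegral_congr_ae stdSimplex2_meas
    filter_upwards [MeasureTheory.measure_eq_zero_iff_ae_notMem.mp hnull] with p hp _
    have hp1 : p.2 ≠ 1 := by simpa using hp
    rw [koorn_eq_kq _ _ _ _ _ hp1, koorn_eq_kq _ _ _ _ _ hp1]
  rw [hAe, simplex_integral (fun p => kq (γ n m) n m p.1 p.2 * kq (γ n' m') n' m' p.1 p.2) ((kq_cont _ _ _).mul (kq_cont _ _ _))]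
  set L : ℝ := ∫ t in (0:ℝ)..1, jacobiP m 0 0 (2*t-1) * jacobiP m' 0 0 (2*t-1) with hL
  have hinner : ∀ η ∈ Set.uIcc (0:ℝ) 1,
      (∫ ξ in (0:ℝ)..(1-η), kq (γ n m) n m ξ η * kq (γ n' m') n' m' ξ η)
      = (γ n m * γ n' m' * L)
          * (jacobiP (n-m) 0 (2*m+1) (1-2*η) * jacobiP (n'-m') 0 (2*m'+1) (1-2*η)
              * (1-η)^(m+m'+1)) := by
    intro η _
    by_cases hη : η = 1
    · subst hη
      norm_num
    · have hc : (1:ℝ) - η ≠ 0 := sub_ne_zero.mpr (Ne.symm hη)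
      have e : ∀ ξ : ℝ, kq (γ n m) n m ξ η * kq (γ n' m') n' m' ξ η
          = (γ n m * jacobiP (n-m) 0 (2*m+1) (1-2*η)
              * (γ n' m' * jacobiP (n'-m') 0 (2*m'+1) (1-2*η)))
            * (legSum m ξ η * legSum m' ξ η) := by
        intro ξ; unfold kq; ring
      rw [intervalIntegral.integral_congr (fun ξ _ => e ξ),
        intervalIntegral.integral_const_mul]
      have hsub : (∫ ξ in (0:ℝ)..(1-η), legSum m ξ η * legSum m' ξ η)
          = (1-η) * ∫ t in (0:ℝ)..1, legSum m (t*(1-η)) η * legSum m' (t*(1-η)) η := by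
        have key := intervalIntegral.integral_comp_mul_left (a := (0:ℝ)) (b := 1)
          (f := fun ξ => legSum m ξ η * legSum m' ξ η) (c := 1-η) hc
        rw [mul_zero, mul_one] at key
        rw [show (∫ t in (0:ℝ)..1, legSum m (t*(1-η)) η * legSum m' (t*(1-η)) η)
            = ∫ t in (0:ℝ)..1, (fun ξ => legSum m ξ η * legSum m' ξ η) ((1-η)*t)
          from intervalIntegral.integral_congr (fun t _ => by
            simp only [mul_comm]), key, smul_eq_mul, ← mul_assoc,
          mul_inv_cancel₀ hc, one_mul]
      rw [hsub]
      have h3 : (∫ t in (0:ℝ)..1, legSum m (t*(1-η)) η * legSum m' (t*(1-η)) η)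
          = (1-η)^(m+m') * L := by
        rw [show (∫ t in (0:ℝ)..1, legSum m (t*(1-η)) η * legSum m' (t*(1-η)) η)
            = ∫ t in (0:ℝ)..1, ((1-η)^(m+m'))
                * (jacobiP m 0 0 (2*t-1) * jacobiP m' 0 0 (2*t-1))
          from intervalIntegral.integral_congr (fun t _ => by
            rw [legSum_scale, legSum_scale, pow_add]; ring),
          intervalIntegral.integral_const_mul, hL]
      rw [h3]; ring
  rw [intervalIntegral.integral_congr hinner, intervalIntegral.integral_const_mul]
  by_cases hmm' : m = m'
  · subst hmm'
    have hkl : n - m ≠ n' - m := by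
      intro hEq
      apply hne
      have : n = n' := by omega
      simp [this]
    have hexp : ∀ η : ℝ, jacobiP (n-m) 0 (2*m+1) (1-2*η) * jacobiP (n'-m) 0 (2*m+1) (1-2*η)
        * (1-η)^(m+m+1) = jacobiP (n-m) 0 (2*m+1) (1-2*η) * jacobiP (n'-m) 0 (2*m+1) (1-2*η)
        * (1-η)^(2*m+1) := by
      intro η; rw [show m+m+1 = 2*m+1 by ring]
    rw [intervalIntegral.integral_congr (fun η _ => hexp η)]
    rcases hkl.lt_or_gt with hlt | hlt
    · rw [intervalIntegral.integral_congr (g := fun η =>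
        jacobiP (n'-m) 0 (2*m+1) (1-2*η) * jacobiP (n-m) 0 (2*m+1) (1-2*η) * (1-η)^(2*m+1))
        (fun η _ => by ring), jacobi_orth (2*m+1) (n'-m) (n-m) hlt, mul_zero]
    · rw [jacobi_orth (2*m+1) (n-m) (n'-m) hlt, mul_zero]
  · have hL0 : L = 0 := leg_orth m m' hmm'
    rw [hL0]
    simp
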